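/- Let h₁, h₂ be continuous functions on positive definite real symmetric n×n matrices, each satisfying hᵢ(X^{1/2}·Y·X^{1/2}) = hᵢ(X) + hᵢ(Y) for all positive definite X, Y. Suppose the function f(X) = h₁(X) + h₂(I - X), defined for X positive definite with I - X positive definite, satisfies f(Q·X·Qᵀ) = f(X) for every orthogonal matrix Q and every such X. Then there exist κ₁, κ₂ ∈ ℝ with h₁(X) = κ₁ log det X and h₂(X) = κ₂ log det X for all positive definite X, hence f(X) = κ₁ log det X + κ₂ log det(I - X). -/

import Mathlib

open Matrix

open Classical in
/-- The unique positive semidefinite square root of a matrix (junk value `0`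
off the positive semidefinite cone). -/
noncomputable def msqrt {n : ℕ} (X : Matrix (Fin n) (Fin n) ℝ) : Matrix (Fin n) (Fin n) ℝ :=
  if h : X.PosSemidef then
    (h.1.eigenvectorUnitary : Matrix (Fin n) (Fin n) ℝ) *
      diagonal (fun i => Real.sqrt (h.1.eigenvalues i)) *
      (star h.1.eigenvectorUnitary : Matrix (Fin n) (Fin n) ℝ)
  else 0

variable {n : ℕ}

open scoped MatrixOrder in
lemma msqrt_eq_sqrt {X : Matrix (Fin n) (Fin n) ℝ} (h : X.PosSemidef) :
    msqrt X = CFC.sqrt X := by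
  rw [msqrt, dif_pos h, CFC.sqrt_eq_cfc, cfc_nnreal_eq_real _ X, h.1.cfc_eq,
    IsHermitian.cfc, Unitary.conjStarAlgAut_apply]
  congr 3
  funext i
  simp [h.eigenvalues_nonneg i]

open scoped MatrixOrder in
lemma msqrt_diagonal {d : Fin n → ℝ} (hd : ∀ i, 0 < d i) :
    msqrt (diagonal d) = diagonal (fun i => Real.sqrt (d i)) := by
  have hpsd : (diagonal d).PosSemidef := .diagonal (fun i => (hd i).le)
  have hs : (diagonal (fun i => Real.sqrt (d i))).PosSemidef :=
    .diagonal (fun i => Real.sqrt_nonneg _)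
  rw [msqrt_eq_sqrt hpsd]
  have : (fun i => Real.sqrt (d i) * Real.sqrt (d i)) = d :=
    funext fun i => Real.mul_self_sqrt (hd i).le
  exact CFC.sqrt_unique (by rw [diagonal_mul_diagonal, this]) (nonneg_iff_posSemidef.mpr hs)

lemma msqrt_smul_one {c : ℝ} (hc : 0 < c) :
    msqrt (c • (1 : Matrix (Fin n) (Fin n) ℝ)) = Real.sqrt c • 1 := by
  rw [smul_one_eq_diagonal, msqrt_diagonal (fun _ => hc), smul_one_eq_diagonal]

lemma posdef_smul {c : ℝ} (hc : 0 < c) {M : Matrix (Fin n) (Fin n) ℝ} (hM : M.PosDef) :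
    (c • M).PosDef := by
  refine Matrix.PosDef.of_dotProduct_mulVec_pos ?_ (fun x hx => ?_)
  · unfold Matrix.IsHermitian
    rw [conjTranspose_smul, hM.1.eq]
    simp
  · rw [smul_mulVec, dotProduct_smul, smul_eq_mul]
    exact mul_pos hc (hM.dotProduct_mulVec_pos hx)

lemma posdef_conj {Q X : Matrix (Fin n) (Fin n) ℝ} (hQ : Q * Qᵀ = 1)
    (hX : X.PosDef) : (Q * X * Qᵀ).PosDef := by
  refine Matrix.PosDef.of_dotProduct_mulVec_pos ?_ (fun x hx => ?_)
  · have := isHermitian_mul_mul_conjTranspose Q hX.1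
    rwa [conjTranspose_eq_transpose_of_trivial] at this
  · have hx' : Qᵀ *ᵥ x ≠ 0 := by
      intro h
      apply hx
      have := congrArg (fun v => Q *ᵥ v) h
      simpa [mulVec_mulVec, hQ] using this
    have H := hX.dotProduct_mulVec_pos hx'
    simp only [star_trivial] at H ⊢
    rw [show x ⬝ᵥ (Q * X * Qᵀ) *ᵥ x = (Qᵀ *ᵥ x) ⬝ᵥ X *ᵥ (Qᵀ *ᵥ x) from ?_]
    · exact H
    calc x ⬝ᵥ (Q * X * Qᵀ) *ᵥ x = x ⬝ᵥ Q *ᵥ (X *ᵥ (Qᵀ *ᵥ x)) := by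
          rw [← mulVec_mulVec, ← mulVec_mulVec]
      _ = (Qᵀ *ᵥ x) ⬝ᵥ X *ᵥ (Qᵀ *ᵥ x) := by
          rw [dotProduct_mulVec x Q, ← mulVec_transpose]

lemma abs_mul_le_S {x : Fin n → ℝ} (i j : Fin n) :
    |x i * x j| ≤ ∑ k, x k ^ 2 := by
  have hi : x i ^ 2 ≤ ∑ k, x k ^ 2 :=
    Finset.single_le_sum (fun k _ => sq_nonneg (x k)) (Finset.mem_univ i)
  have hj : x j ^ 2 ≤ ∑ k, x k ^ 2 :=
    Finset.single_le_sum (fun k _ => sq_nonneg (x k)) (Finset.mem_univ j)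
  have h2 : 2 * |x i| * |x j| ≤ |x i| ^ 2 + |x j| ^ 2 := two_mul_le_add_sq _ _
  rw [abs_mul]
  nlinarith [abs_nonneg (x i), abs_nonneg (x j), sq_abs (x i), sq_abs (x j)]

lemma exists_small (X : Matrix (Fin n) (Fin n) ℝ) (hX : X.IsHermitian) :
    ∃ ε > 0, ∀ c : ℝ, 0 < c → c ≤ ε → (1 - c • X).PosDef := by
  set K : ℝ := (∑ i, ∑ j, |X i j|) + 1 with hK
  have hKpos : 0 < K := by
    have : (0:ℝ) ≤ ∑ i, ∑ j, |X i j| :=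
      Finset.sum_nonneg fun i _ => Finset.sum_nonneg fun j _ => abs_nonneg _
    linarith
  refine ⟨1 / (2 * K), by positivity, fun c hc hcε => ?_⟩
  refine Matrix.PosDef.of_dotProduct_mulVec_pos ?_ ?_
  · unfold Matrix.IsHermitian
    rw [conjTranspose_sub, conjTranspose_smul, hX.eq, conjTranspose_one]
    simp
  · intro x hx
    have hS : 0 < ∑ k, x k ^ 2 := by
      have := (dotProduct_star_self_pos_iff (v := x)).mpr hx
      simpa [dotProduct, pow_two] using this
    set S := ∑ k, x k ^ 2 with hSdef
    have hquad : x ⬝ᵥ X *ᵥ x ≤ (K - 1) * S := by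
      have : x ⬝ᵥ X *ᵥ x = ∑ i, ∑ j, x i * (X i j * x j) := by
        simp [dotProduct, mulVec, Finset.mul_sum]
      rw [this]
      have hbound : ∀ i j : Fin n, x i * (X i j * x j) ≤ |X i j| * S := by
        intro i j
        calc x i * (X i j * x j) ≤ |x i * (X i j * x j)| := le_abs_self _
          _ = |X i j| * |x i * x j| := by simp only [abs_mul]; ring
          _ ≤ |X i j| * S := by
              exact mul_le_mul_of_nonneg_left (abs_mul_le_S i j) (abs_nonneg _)
      calc ∑ i, ∑ j, x i * (X i j * x j) ≤ ∑ i, ∑ j, |X i j| * S :=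
            Finset.sum_le_sum fun i _ => Finset.sum_le_sum fun j _ => hbound i j
        _ = (K - 1) * S := by
            rw [hK, add_sub_cancel_right, Finset.sum_mul]
            exact Finset.sum_congr rfl fun i _ => by rw [Finset.sum_mul]
    have hform : star x ⬝ᵥ (1 - c • X) *ᵥ x = S - c * (x ⬝ᵥ X *ᵥ x) := by
      simp only [sub_mulVec, dotProduct_sub, smul_mulVec, dotProduct_smul,
        smul_eq_mul, one_mulVec, dotProduct, Pi.sub_apply, Pi.smul_apply, Pi.star_apply, star_trivial]
      rw [hSdef, Finset.mul_sum, ← Finset.sum_sub_distrib]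
      exact Finset.sum_congr rfl fun k _ => by ring
    rw [hform]
    have h1 : c * (x ⬝ᵥ X *ᵥ x) ≤ c * ((K - 1) * S) :=
      mul_le_mul_of_nonneg_left hquad hc.le
    have h2 : c * K ≤ 1/2 := by
      calc c * K ≤ (1/(2*K)) * K := mul_le_mul_of_nonneg_right hcε hKpos.le
        _ = 1/2 := by field_simp
    nlinarith [mul_le_mul_of_nonneg_right h2 hS.le, mul_pos hc hS]

lemma perm_conj (e : Equiv.Perm (Fin n)) (d : Fin n → ℝ) :
    ((1 : Matrix (Fin n) (Fin n) ℝ).submatrix e id) * diagonal d *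
      ((1 : Matrix (Fin n) (Fin n) ℝ).submatrix e id)ᵀ = diagonal (d ∘ e) := by
  ext a b
  simp [Matrix.mul_apply, diagonal_apply, one_apply, Finset.sum_ite_eq,
    Finset.sum_ite_eq', mul_ite, ite_mul, submatrix_apply, transpose_apply,
    e.injective.eq_iff]
  split_ifs with h
  · rw [h]
  · rfl

lemma perm_orth_l (e : Equiv.Perm (Fin n)) :
    ((1 : Matrix (Fin n) (Fin n) ℝ).submatrix e id) *
      ((1 : Matrix (Fin n) (Fin n) ℝ).submatrix e id)ᵀ = 1 := by
  ext a b
  simp [Matrix.mul_apply, one_apply, Finset.sum_ite_eq, Finset.sum_ite_eq',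
    mul_ite, ite_mul, submatrix_apply, transpose_apply, e.injective.eq_iff,
    Equiv.apply_eq_iff_eq_symm_apply, eq_comm]

lemma perm_orth_r (e : Equiv.Perm (Fin n)) :
    ((1 : Matrix (Fin n) (Fin n) ℝ).submatrix e id)ᵀ *
      ((1 : Matrix (Fin n) (Fin n) ℝ).submatrix e id) = 1 := by
  ext a b
  rw [Matrix.mul_apply]
  simp only [submatrix_apply, transpose_apply, id_eq, one_apply]
  rw [Finset.sum_congr rfl (fun x _ => show (if e x = a then (1:ℝ) else 0) * (if e x = b then 1 else 0)
      = if x = e.symm a then (if x = e.symm b then 1 else 0) else 0 from by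
        simp only [Equiv.apply_eq_iff_eq_symm_apply, ite_and, mul_ite, ite_mul,
          one_mul, mul_one, mul_zero, zero_mul]
        split_ifs <;> rfl)]
  simp [Finset.sum_ite_eq, e.symm.injective.eq_iff]

set_option maxHeartbeats 1000000 in
lemma log_multiple (hn : 0 < n) (h : Matrix (Fin n) (Fin n) ℝ → ℝ)
    (hc : ContinuousOn h {X | X.PosDef})
    (hl : ∀ X Y : Matrix (Fin n) (Fin n) ℝ, X.PosDef → Y.PosDef →
      h (msqrt X * Y * msqrt X) = h X + h Y)
    (hK : ∀ Q : Matrix (Fin n) (Fin n) ℝ, Q * Qᵀ = 1 → Qᵀ * Q = 1 →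
      ∀ X : Matrix (Fin n) (Fin n) ℝ, X.PosDef → h (Q * X * Qᵀ) = h X) :
    ∃ κ : ℝ, ∀ X : Matrix (Fin n) (Fin n) ℝ, X.PosDef → h X = κ * Real.log X.det := by
  -- additivity on diagonals
  have hdiag : ∀ d e : Fin n → ℝ, (∀ i, 0 < d i) → (∀ i, 0 < e i) →
      h (diagonal (fun i => d i * e i)) = h (diagonal d) + h (diagonal e) := by
    intro d e hd he
    have H := hl (diagonal d) (diagonal e) (.diagonal hd) (.diagonal he)
    rw [msqrt_diagonal hd, diagonal_mul_diagonal, diagonal_mul_diagonal] at H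
    have hfun : (fun i => Real.sqrt (d i) * e i * Real.sqrt (d i)) = fun i => d i * e i :=
      funext fun i => by rw [mul_right_comm, Real.mul_self_sqrt (hd i).le]
    rwa [hfun] at H
  set G : (Fin n → ℝ) → ℝ := fun t => h (diagonal fun i => Real.exp (t i)) with hG
  have Gadd : ∀ s t : Fin n → ℝ, G (s + t) = G s + G t := by
    intro s t
    have := hdiag (fun i => Real.exp (s i)) (fun i => Real.exp (t i))
      (fun i => Real.exp_pos _) (fun i => Real.exp_pos _)
    simp only [hG, Pi.add_apply, Real.exp_add]
    exact this
  set φ : (Fin n → ℝ) →+ ℝ := AddMonoidHom.mk' G Gadd with hφ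
  have Gcont : Continuous G := by
    apply hc.comp_continuous
    · apply continuous_matrix
      intro i j
      by_cases hij : i = j
      · subst hij
        simp only [diagonal_apply_eq]
        exact Real.continuous_exp.comp (continuous_apply i)
      · simp only [diagonal_apply_ne _ hij]
        exact continuous_const
    · exact fun t => Matrix.PosDef.diagonal fun i => Real.exp_pos _
  have hsingle : ∀ (i : Fin n) (s : ℝ), G (Pi.single i s) = s * G (Pi.single i 1) := by
    intro i s
    have hsm : (Pi.single i s : Fin n → ℝ) = s • (Pi.single i 1 : Fin n → ℝ) := by
      funext k
      simp [Pi.single_apply, mul_ite]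
    have := map_real_smul φ Gcont s (Pi.single i 1)
    rw [hsm]
    exact this
  have hGsum : ∀ t : Fin n → ℝ, G t = ∑ i, t i * G (Pi.single i 1) := by
    intro t
    have h1 : G t = φ (∑ i, Pi.single i (t i)) := by
      rw [Finset.univ_sum_single t]
      rfl
    rw [h1, map_sum]
    exact Finset.sum_congr rfl fun i _ => hsingle i (t i)
  -- all coefficients are equal
  have hswap : ∀ i j : Fin n, G (Pi.single i 1) = G (Pi.single j 1) := by
    intro i j
    have hcomp : ((fun k => Real.exp ((Pi.single j (1:ℝ) : Fin n → ℝ) k)) ∘ (Equiv.swap i j)) =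
        (fun k => Real.exp ((Pi.single i (1:ℝ) : Fin n → ℝ) k)) := by
      funext k
      rw [Function.comp_apply, Real.exp_eq_exp, Pi.single_apply, Pi.single_apply]
      simp only [Equiv.swap_apply_eq_iff, Equiv.swap_apply_right]
    have hKQ := hK _ (perm_orth_l (Equiv.swap i j)) (perm_orth_r (Equiv.swap i j))
      (diagonal fun k => Real.exp ((Pi.single j (1:ℝ) : Fin n → ℝ) k))
      (Matrix.PosDef.diagonal fun k => Real.exp_pos _)
    rw [perm_conj, hcomp] at hKQ
    exact hKQ
  set i₀ : Fin n := ⟨0, hn⟩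
  set κ : ℝ := G (Pi.single i₀ 1) with hκ
  have hdiaglog : ∀ d : Fin n → ℝ, (∀ i, 0 < d i) →
      h (diagonal d) = κ * Real.log (∏ i, d i) := by
    intro d hd
    have hde : d = fun i => Real.exp (Real.log (d i)) :=
      funext fun i => (Real.exp_log (hd i)).symm
    have h2 : h (diagonal d) = G (fun i => Real.log (d i)) := by
      conv_lhs => rw [hde]
    rw [h2, hGsum]
    rw [Real.log_prod (fun i _ => (hd i).ne')]
    rw [Finset.mul_sum]
    exact Finset.sum_congr rfl fun i _ => by rw [hswap i i₀, ← hκ, mul_comm]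
  refine ⟨κ, fun X hX => ?_⟩
  have hH := hX.1
  have spec := hH.spectral_theorem
  set U : Matrix (Fin n) (Fin n) ℝ := (IsHermitian.eigenvectorUnitary hH : Matrix (Fin n) (Fin n) ℝ) with hU
  have hstar : star U = Uᵀ := by
    rw [Matrix.star_eq_conjTranspose, conjTranspose_eq_transpose_of_trivial]
  have hU1 : U * Uᵀ = 1 := by
    rw [← hstar]
    exact (Matrix.mem_unitaryGroup_iff).mp (IsHermitian.eigenvectorUnitary hH).2
  have hU2 : Uᵀ * U = 1 := by
    rw [← hstar]
    exact (Matrix.mem_unitaryGroup_iff').mp (IsHermitian.eigenvectorUnitary hH).2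
  have hdiagU : diagonal (RCLike.ofReal ∘ hH.eigenvalues) = diagonal hH.eigenvalues := by
    rw [RCLike.ofReal_real_eq_id]
    rfl
  have hXeq : X = U * diagonal hH.eigenvalues * Uᵀ := by
    rw [← hdiagU, ← hstar]
    exact spec
  have hev : ∀ i, 0 < hH.eigenvalues i := fun i => hX.eigenvalues_pos i
  have hdet : X.det = ∏ i, hH.eigenvalues i := by
    have := hH.det_eq_prod_eigenvalues
    simpa using this
  rw [hXeq, hK U hU1 hU2 _ (Matrix.PosDef.diagonal hev), hdiaglog _ hev, ← hdet, ← hXeq]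



/-- K-invariance lemma: if `h₁, h₂` are continuous `w₁`-logarithmic and
`X ↦ h₁(X) + h₂(I - X)` is invariant under orthogonal conjugation, then both
are multiples of `log det`. -/
theorem K_invariant_logarithmic (n : ℕ)
    (h₁ h₂ : Matrix (Fin n) (Fin n) ℝ → ℝ)
    (hc₁ : ContinuousOn h₁ {X | X.PosDef}) (hc₂ : ContinuousOn h₂ {X | X.PosDef})
    (hl₁ : ∀ X Y : Matrix (Fin n) (Fin n) ℝ, X.PosDef → Y.PosDef →
      h₁ (msqrt X * Y * msqrt X) = h₁ X + h₁ Y)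
    (hl₂ : ∀ X Y : Matrix (Fin n) (Fin n) ℝ, X.PosDef → Y.PosDef →
      h₂ (msqrt X * Y * msqrt X) = h₂ X + h₂ Y)
    (hinv : ∀ Q : Matrix (Fin n) (Fin n) ℝ, Q * Qᵀ = 1 → Qᵀ * Q = 1 →
      ∀ X : Matrix (Fin n) (Fin n) ℝ, X.PosDef → (1 - X).PosDef →
        h₁ (Q * X * Qᵀ) + h₂ (1 - Q * X * Qᵀ) = h₁ X + h₂ (1 - X)) :
    ∃ κ₁ κ₂ : ℝ, (∀ X : Matrix (Fin n) (Fin n) ℝ, X.PosDef →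
      h₁ X = κ₁ * Real.log X.det ∧ h₂ X = κ₂ * Real.log X.det) ∧
      ∀ X : Matrix (Fin n) (Fin n) ℝ, X.PosDef → (1 - X).PosDef →
        h₁ X + h₂ (1 - X) = κ₁ * Real.log X.det + κ₂ * Real.log (1 - X).det := by
  rcases Nat.eq_zero_or_pos n with hn | hn
  · subst hn
    have hsub : ∀ a b : Matrix (Fin 0) (Fin 0) ℝ, a = b := by
      intro a b
      ext i
      exact i.elim0
    have key : ∀ (h : Matrix (Fin 0) (Fin 0) ℝ → ℝ),
        (∀ X Y : Matrix (Fin 0) (Fin 0) ℝ, X.PosDef → Y.PosDef →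
          h (msqrt X * Y * msqrt X) = h X + h Y) →
        ∀ X : Matrix (Fin 0) (Fin 0) ℝ, X.PosDef → h X = 0 := by
      intro h hl X hX
      have H := hl X X hX hX
      rw [hsub (msqrt X * X * msqrt X) X] at H
      linarith
    refine ⟨0, 0, fun X hX => ⟨?_, ?_⟩, fun X hX hX' => ?_⟩
    · rw [key h₁ hl₁ X hX, zero_mul]
    · rw [key h₂ hl₂ X hX, zero_mul]
    · rw [key h₁ hl₁ X hX, key h₂ hl₂ _ hX', zero_mul, zero_mul, add_zero]
  · -- scaling law
    have hscale : ∀ (h : Matrix (Fin n) (Fin n) ℝ → ℝ),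
        (∀ X Y : Matrix (Fin n) (Fin n) ℝ, X.PosDef → Y.PosDef →
          h (msqrt X * Y * msqrt X) = h X + h Y) →
        ∀ c : ℝ, 0 < c → ∀ X : Matrix (Fin n) (Fin n) ℝ, X.PosDef →
          h (c • X) = h (c • (1 : Matrix (Fin n) (Fin n) ℝ)) + h X := by
      intro h hl c hc X hX
      have h1 : ((c : ℝ) • (1 : Matrix (Fin n) (Fin n) ℝ)).PosDef :=
        posdef_smul hc Matrix.PosDef.one
      have H := hl (c • 1) X h1 hX
      have hmul : msqrt (c • (1 : Matrix (Fin n) (Fin n) ℝ)) * X *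
          msqrt (c • (1 : Matrix (Fin n) (Fin n) ℝ)) = c • X := by
        rw [msqrt_smul_one hc, smul_mul_assoc, smul_mul_assoc, mul_smul_comm,
          one_mul, mul_one, smul_smul, Real.mul_self_sqrt hc.le]
      rwa [hmul] at H
    -- invariance of h₁
    have hinv1 : ∀ Q : Matrix (Fin n) (Fin n) ℝ, Q * Qᵀ = 1 → Qᵀ * Q = 1 →
        ∀ X : Matrix (Fin n) (Fin n) ℝ, X.PosDef → h₁ (Q * X * Qᵀ) = h₁ X := by
      intro Q hQ1 hQ2 X hX
      set Y : Matrix (Fin n) (Fin n) ℝ := Q * X * Qᵀ with hY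
      have hYpd : Y.PosDef := posdef_conj hQ1 hX
      obtain ⟨ε₁, hε₁, hb₁⟩ := exists_small X hX.1
      obtain ⟨ε₂, hε₂, hb₂⟩ := exists_small Y hYpd.1
      set ε : ℝ := min ε₁ ε₂ with hεdef
      have hε : 0 < ε := lt_min hε₁ hε₂
      have key : ∀ c : ℝ, 0 < c → c ≤ ε →
          h₂ (1 - c • X) - h₂ (1 - c • Y) = h₁ Y - h₁ X := by
        intro c hc hce
        have hXc : (c • X).PosDef := posdef_smul hc hX
        have h1mX : ((1 : Matrix (Fin n) (Fin n) ℝ) - c • X).PosDef :=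
          hb₁ c hc (hce.trans (min_le_left _ _))
        have H := hinv Q hQ1 hQ2 (c • X) hXc h1mX
        have hQc : Q * (c • X) * Qᵀ = c • Y := by
          rw [hY, mul_smul_comm, smul_mul_assoc]
        rw [hQc] at H
        have e1 : h₁ (c • Y) = h₁ (c • (1 : Matrix (Fin n) (Fin n) ℝ)) + h₁ Y :=
          hscale h₁ hl₁ c hc Y hYpd
        have e2 : h₁ (c • X) = h₁ (c • (1 : Matrix (Fin n) (Fin n) ℝ)) + h₁ X :=
          hscale h₁ hl₁ c hc X hX
        rw [e1, e2] at H
        linarith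
      set c : ℕ → ℝ := fun k => ε / (k + 1) with hcdef
      have hcpos : ∀ k, 0 < c k := fun k => by positivity
      have hcle : ∀ k, c k ≤ ε := by
        intro k
        rw [hcdef]
        apply div_le_self hε.le
        have : (0 : ℝ) ≤ (k : ℝ) := Nat.cast_nonneg k
        linarith
      have hc0 : Filter.Tendsto c Filter.atTop (nhds 0) := by
        have h1 : Filter.Tendsto (fun k : ℕ => 1 / ((k : ℝ) + 1)) Filter.atTop (nhds 0) :=
          tendsto_one_div_add_atTop_nhds_zero_nat
        have h2 := h1.const_mul ε
        simpa [hcdef, div_eq_mul_inv, one_div] using h2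
      have hone : (1 : Matrix (Fin n) (Fin n) ℝ).PosDef := Matrix.PosDef.one
      have tendmat : ∀ Z : Matrix (Fin n) (Fin n) ℝ,
          Filter.Tendsto (fun k => (1 : Matrix (Fin n) (Fin n) ℝ) - c k • Z)
            Filter.atTop (nhds 1) := by
        intro Z
        have hz : Filter.Tendsto (fun k => c k • Z) Filter.atTop
            (nhds ((0 : ℝ) • Z)) := hc0.smul tendsto_const_nhds
        rw [zero_smul] at hz
        have hone' : Filter.Tendsto (fun _ : ℕ => (1 : Matrix (Fin n) (Fin n) ℝ))
            Filter.atTop (nhds 1) := tendsto_const_nhds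
        have := hone'.sub hz
        simpa using this
      have tendX : Filter.Tendsto (fun k => h₂ (1 - c k • X)) Filter.atTop (nhds (h₂ 1)) := by
        apply ((hc₂ 1 hone).tendsto).comp
        apply tendsto_nhdsWithin_of_tendsto_nhds_of_eventually_within _ (tendmat X)
        exact Filter.Eventually.of_forall fun k =>
          hb₁ (c k) (hcpos k) ((hcle k).trans (min_le_left _ _))
      have tendY : Filter.Tendsto (fun k => h₂ (1 - c k • Y)) Filter.atTop (nhds (h₂ 1)) := by
        apply ((hc₂ 1 hone).tendsto).comp
        apply tendsto_nhdsWithin_of_tendsto_nhds_of_eventually_within _ (tendmat Y)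
        exact Filter.Eventually.of_forall fun k =>
          hb₂ (c k) (hcpos k) ((hcle k).trans (min_le_right _ _))
      have tendδ : Filter.Tendsto (fun k => h₂ (1 - c k • X) - h₂ (1 - c k • Y))
          Filter.atTop (nhds 0) := by
        simpa using tendX.sub tendY
      have hconst : (fun k => h₂ (1 - c k • X) - h₂ (1 - c k • Y)) =
          fun _ => h₁ Y - h₁ X :=
        funext fun k => key (c k) (hcpos k) (hcle k)
      rw [hconst] at tendδ
      have := tendsto_nhds_unique tendδ tendsto_const_nhds
      linarith
    -- invariance of h₂
    have hinv2 : ∀ Q : Matrix (Fin n) (Fin n) ℝ, Q * Qᵀ = 1 → Qᵀ * Q = 1 →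
        ∀ Y : Matrix (Fin n) (Fin n) ℝ, Y.PosDef → h₂ (Q * Y * Qᵀ) = h₂ Y := by
      intro Q hQ1 hQ2 Y hY
      obtain ⟨ε, hε, hb⟩ := exists_small Y hY.1
      have hcY : (ε • Y).PosDef := posdef_smul hε hY
      have h1m : ((1 : Matrix (Fin n) (Fin n) ℝ) - ε • Y).PosDef := hb ε hε le_rfl
      have H := hinv Q hQ1 hQ2 (1 - ε • Y) h1m (by rw [sub_sub_cancel]; exact hcY)
      rw [hinv1 Q hQ1 hQ2 _ h1m] at H
      have hQ1m : (1 : Matrix (Fin n) (Fin n) ℝ) - Q * (1 - ε • Y) * Qᵀ =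
          ε • (Q * Y * Qᵀ) := by
        rw [mul_sub, sub_mul, mul_one, mul_smul_comm, smul_mul_assoc, hQ1, sub_sub_cancel]
      rw [hQ1m, sub_sub_cancel] at H
      have e1 : h₂ (ε • (Q * Y * Qᵀ)) = h₂ (ε • (1 : Matrix (Fin n) (Fin n) ℝ)) +
          h₂ (Q * Y * Qᵀ) := hscale h₂ hl₂ ε hε _ (posdef_conj hQ1 hY)
      have e2 : h₂ (ε • Y) = h₂ (ε • (1 : Matrix (Fin n) (Fin n) ℝ)) + h₂ Y :=
        hscale h₂ hl₂ ε hε Y hY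
      rw [e1, e2] at H
      linarith
    obtain ⟨κ₁, hκ₁⟩ := log_multiple hn h₁ hc₁ hl₁ hinv1
    obtain ⟨κ₂, hκ₂⟩ := log_multiple hn h₂ hc₂ hl₂ hinv2
    exact ⟨κ₁, κ₂, fun X hX => ⟨hκ₁ X hX, hκ₂ X hX⟩,
      fun X hX hX' => by rw [hκ₁ X hX, hκ₂ _ hX']⟩
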